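/- Let k be an algebraically closed field with char k ≠ 2 and N = m+n ≥ 1. If g₁, g₂ ∈ Sp_{2N}(k) lie in the same double coset B(k) g K(k) inside GL_{2N}(k), then g₁ and g₂ lie in the same double coset B^φ(k) g K^φ(k) inside Sp_{2N}(k). Equivalently, the natural map from the set of double cosets B^φ(k)\Sp_{2N}(k)/K^φ(k) to the set of double cosets B(k)\GL_{2N}(k)/K(k) induced by the inclusion Sp_{2N}(k) ⊆ GL_{2N}(k) is injective. -/

import Mathlib

open Matrix

/-- The integer index of the `i`-th coordinate, where coordinates are indexed by
`I = {-N, …, -1, 1, …, N}` in increasing order. -/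
def sympIdx (N : ℕ) (i : Fin (2 * N)) : ℤ :=
  if (i : ℕ) < N then (i : ℤ) - N else (i : ℤ) - N + 1

/-- The Gram matrix of the standard symplectic form `ω`: `ω(e_i, e_j) = 0` when `i + j ≠ 0`
and `ω(e_{-j}, e_j) = 1` for `j > 0`. -/
def sympForm (N : ℕ) (k : Type*) [Field k] : Matrix (Fin (2 * N)) (Fin (2 * N)) k :=
  fun i j => if sympIdx N i + sympIdx N j = 0 then (if sympIdx N i < 0 then 1 else -1) else 0

/-- Membership in the symplectic group `Sp_{2N}(k)`: `g` preserves the form `ω`. -/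
def InSp (N : ℕ) {k : Type*} [Field k] (g : GL (Fin (2 * N)) k) : Prop :=
  (g : Matrix (Fin (2 * N)) (Fin (2 * N)) k)ᵀ * sympForm N k *
    (g : Matrix (Fin (2 * N)) (Fin (2 * N)) k) = sympForm N k

/-- The diagonal involution `φ`, with entry `+1` at indices `i` with `1 ≤ |i| ≤ m` and
entry `-1` at indices with `m < |i| ≤ N`. -/
def phiMat (m N : ℕ) (k : Type*) [Field k] : Matrix (Fin (2 * N)) (Fin (2 * N)) k :=
  Matrix.diagonal fun i => if |sympIdx N i| ≤ (m : ℤ) then 1 else -1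

/-- A square matrix is upper triangular: every entry below the diagonal vanishes. -/
def IsUpperTriangular {N : ℕ} {k : Type*} [Field k] (g : Matrix (Fin N) (Fin N) k) : Prop :=
  ∀ i j : Fin N, (j : ℕ) < (i : ℕ) → g i j = 0

/-- A square matrix commutes with `φ`, i.e. lies in the centralizer `K(k)` of `φ`. -/
def CommutesWithPhi (m N : ℕ) {k : Type*} [Field k]
    (g : Matrix (Fin (2 * N)) (Fin (2 * N)) k) : Prop :=
  g * phiMat m N k = phiMat m N k * g


open Polynomial


lemma sqrt_one_add_nilpotent {R : Type*} [CommRing R] (h2 : IsUnit (2:R))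
    {ε : R} (hε : IsNilpotent ε) : ∃ w : R, w * w = 1 + ε := by
  obtain ⟨v, hv⟩ := h2
  have h2v : (2:R) * ↑v⁻¹ = 1 := by rw [← hv]; exact v.mul_inv
  have key : ∀ K : ℕ, ∃ w c : R, IsUnit w ∧ w * w = 1 + ε + c * ε ^ (2 ^ K) := by
    intro K
    induction K with
    | zero => exact ⟨1, -1, isUnit_one, by ring⟩
    | succ K ih =>
      obtain ⟨w, c, hw, he⟩ := ih
      obtain ⟨u, hu⟩ := hw
      have h1 : (u:R) * ↑u⁻¹ = 1 := u.mul_inv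
      have hp : ε ^ (2^K) * ε ^ (2^K) = ε ^ (2^(K+1)) := by
        rw [← pow_add]; congr 1; rw [pow_succ]; ring
      have hnE : IsNilpotent (-((↑v⁻¹:R) * ↑u⁻¹ * c) * ε ^ (2^K)) := by
        obtain ⟨nn, hnn⟩ := hε
        refine ⟨nn, ?_⟩
        rw [mul_pow, ← pow_mul, mul_comm (2^K) nn, pow_mul, hnn,
          zero_pow (by positivity : (2:ℕ)^K ≠ 0), mul_zero]
      refine ⟨↑u - ↑v⁻¹ * ↑u⁻¹ * c * ε ^ (2^K),
        ↑v⁻¹ * ↑v⁻¹ * ↑u⁻¹ * ↑u⁻¹ * c * c, ?_, ?_⟩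
      · have := hnE.isUnit_add_left_of_commute u.isUnit (Commute.all _ _)
        convert this using 1; ring
      · subst hu
        linear_combination he + (↑v⁻¹ * ↑v⁻¹ * ↑u⁻¹ * ↑u⁻¹ * c * c) * hp
          - (2 * ↑v⁻¹ * c * ε^(2^K)) * h1 - ((↑u:R) * ↑u⁻¹ * c * ε^(2^K)) * h2v
          + (2 * ↑v⁻¹ * c * ε^(2^K) - c * ε^(2^K)) * h1
  obtain ⟨nn, hnn⟩ := hε
  obtain ⟨w, c, _, he⟩ := key nn
  have hz : ε ^ (2 ^ nn) = 0 := by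
    have hle : nn ≤ 2 ^ nn := Nat.le_of_lt Nat.lt_two_pow_self
    calc ε ^ (2^nn) = ε ^ nn * ε ^ (2^nn - nn) := by rw [← pow_add]; congr 1; omega
    _ = 0 := by rw [hnn, zero_mul]
  exact ⟨w, by rw [he, hz, mul_zero, add_zero]⟩


section
variable {k : Type*} [Field k] [IsAlgClosed k]

lemma local_sqrt (h2 : (2:k) ≠ 0) {lam : k} (hlam : lam ≠ 0) (M : ℕ) :
    ∃ q : k[X], (X - C lam) ^ M ∣ q * q - X := by
  set I : Ideal k[X] := Ideal.span {(X - C lam) ^ M} with hI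
  set π : k[X] →+* k[X] ⧸ I := Ideal.Quotient.mk I with hπdef
  have hπ : Function.Surjective π := Ideal.Quotient.mk_surjective
  have hε : IsNilpotent (π (C lam⁻¹ * X - 1)) := by
    refine ⟨M, ?_⟩
    rw [← _root_.map_pow, Ideal.Quotient.eq_zero_iff_mem]
    have hrw : (C lam⁻¹ * X - 1) = C lam⁻¹ * (X - C lam) := by
      rw [mul_sub, ← C_mul, inv_mul_cancel₀ hlam, C_1]
    rw [hrw, mul_pow]
    exact I.mul_mem_left _ (Ideal.subset_span rfl)
  have h2u : IsUnit (2 : k[X] ⧸ I) := by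
    have hC : IsUnit (C (2:k)) := Polynomial.isUnit_C.mpr (isUnit_iff_ne_zero.mpr h2)
    have := hC.map π
    have hC2 : (C (2:k)) = (2 : k[X]) := by
      rw [← one_add_one_eq_two, _root_.map_add, _root_.map_one, one_add_one_eq_two]
    rwa [hC2, map_ofNat] at this
  obtain ⟨μ, hμ⟩ := IsAlgClosed.exists_pow_nat_eq lam (n := 2) (by norm_num)
  obtain ⟨w, hw⟩ := sqrt_one_add_nilpotent h2u hε
  have hWW : (π (C μ) * w) * (π (C μ) * w) = π X := by
    have h1 : (π (C μ) * w) * (π (C μ) * w) = π (C lam) * (1 + π (C lam⁻¹ * X - 1)) := by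
      have hμμ : C μ * C μ = C lam := by rw [← C_mul, ← sq, hμ]
      calc (π (C μ) * w) * (π (C μ) * w) = π (C μ * C μ) * (w * w) := by
            rw [_root_.map_mul]; ring
        _ = π (C lam) * (1 + π (C lam⁻¹ * X - 1)) := by rw [hμμ, hw]
    rw [h1, ← _root_.map_one π, ← _root_.map_add, ← _root_.map_mul]
    congr 1
    have : (1:k[X]) + (C lam⁻¹ * X - 1) = C lam⁻¹ * X := by ring
    rw [this, ← mul_assoc, ← C_mul, mul_inv_cancel₀ hlam, C_1, one_mul]
  obtain ⟨q₀, hq₀⟩ := hπ w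
  refine ⟨C μ * q₀, ?_⟩
  rw [← Ideal.mem_span_singleton, ← hI]
  rw [← Ideal.Quotient.eq_zero_iff_mem]
  have : (Ideal.Quotient.mk I) ((C μ * q₀) * (C μ * q₀) - X) = (π (C μ) * w) * (π (C μ) * w) - π X := by
    show π ((C μ * q₀) * (C μ * q₀) - X) = _
    simp only [_root_.map_sub, _root_.map_mul, hq₀]
  rw [this, hWW, sub_self]

lemma sqrt_mod_poly (h2 : (2:k) ≠ 0) (χ : k[X]) (hmon : χ.Monic) (h0 : eval 0 χ ≠ 0) :
    ∃ q : k[X], χ ∣ q * q - X := by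
  generalize hd : χ.natDegree = d
  induction d using Nat.strong_induction_on generalizing χ with
  | _ d ih =>
    by_cases hd0 : χ.natDegree = 0
    · have : χ = 1 := hmon.natDegree_eq_zero.mp hd0
      exact ⟨0, this ▸ one_dvd _⟩
    · have hdegne : χ.degree ≠ 0 := by
        rw [Polynomial.degree_eq_natDegree hmon.ne_zero]
        exact_mod_cast hd0
      obtain ⟨lam, hroot⟩ := IsAlgClosed.exists_root χ hdegne
      have hlam : lam ≠ 0 := by
        rintro rfl
        exact h0 hroot
      obtain ⟨ψ, hfac, hndvd⟩ :=
        χ.exists_eq_pow_rootMultiplicity_mul_and_not_dvd hmon.ne_zero lam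
      set M := rootMultiplicity lam χ with hM
      have hMpos : 0 < M := (Polynomial.rootMultiplicity_pos hmon.ne_zero).mpr hroot
      have hmonP : ((X - C lam) ^ M).Monic := (monic_X_sub_C lam).pow M
      have hmonψ : ψ.Monic := by
        have := hfac ▸ hmon
        exact hmonP.of_mul_monic_left this
      have hψ0 : eval 0 ψ ≠ 0 := by
        intro hc
        apply h0
        rw [hfac, eval_mul, hc, mul_zero]
      have hdlt : ψ.natDegree < d := by
        have : χ.natDegree = M + ψ.natDegree := by
          rw [hfac, Polynomial.natDegree_mul hmonP.ne_zero hmonψ.ne_zero,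
            Polynomial.natDegree_pow, Polynomial.natDegree_X_sub_C, mul_one]
        omega
      obtain ⟨q₂, hq₂⟩ := ih ψ.natDegree hdlt ψ hmonψ hψ0 rfl
      obtain ⟨q₁, hq₁⟩ := local_sqrt h2 hlam M
      have hirr : Irreducible (X - C lam) := Polynomial.irreducible_X_sub_C lam
      have hcop : IsCoprime ((X - C lam) ^ M) ψ :=
        (hirr.coprime_iff_not_dvd.mpr hndvd).pow_left
      obtain ⟨U, V, hUV⟩ := id hcop
      set P := (X - C lam) ^ M with hP
      refine ⟨q₂ * (U * P) + q₁ * (V * ψ), ?_⟩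
      rw [hfac]
      apply IsCoprime.mul_dvd hcop
      · set q := q₂ * (U * P) + q₁ * (V * ψ) with hq
        have hd1 : q - q₁ = (q₂ * U - q₁ * U) * P := by
          rw [hq]; linear_combination q₁ * hUV
        have : q * q - X = (q - q₁) * (q + q₁) + (q₁ * q₁ - X) := by ring
        rw [this, hd1]
        exact dvd_add ((dvd_mul_left P _).mul_right _) hq₁
      · set q := q₂ * (U * P) + q₁ * (V * ψ) with hq
        have hd2 : q - q₂ = (q₁ * V - q₂ * V) * ψ := by
          rw [hq]; linear_combination q₂ * hUV
        have : q * q - X = (q - q₂) * (q + q₂) + (q₂ * q₂ - X) := by ring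
        rw [this, hd2]
        exact dvd_add ((dvd_mul_left ψ _).mul_right _) hq₂
end


-- assumes defs sympIdx sympForm _root_.IsUpperTriangular etc. are present
section

variable {k : Type*} [Field k] {N : ℕ}

/-- the index-reversal involution -/
def revF (N : ℕ) (i : Fin (2*N)) : Fin (2*N) :=
  ⟨2*N - 1 - (i:ℕ), by have := i.isLt; omega⟩

lemma revF_revF (i : Fin (2*N)) : revF N (revF N i) = i := by
  have := i.isLt
  simp only [revF]
  ext
  simp
  omega

lemma revF_val (i : Fin (2*N)) : (revF N i : ℕ) = 2*N - 1 - (i:ℕ) := rfl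

lemma sympIdx_neg_iff (i : Fin (2*N)) : sympIdx N i < 0 ↔ (i:ℕ) < N := by
  have := i.isLt
  unfold sympIdx
  split_ifs with h <;> constructor <;> intro hh <;> first | omega | tauto

lemma sympIdx_add_eq_zero_iff {i j : Fin (2*N)} :
    sympIdx N i + sympIdx N j = 0 ↔ j = revF N i := by
  have hi := i.isLt
  have hj := j.isLt
  rw [Fin.ext_iff, revF_val]
  unfold sympIdx
  split_ifs with h1 h2 h2 <;> omega

lemma sympIdx_revF (i : Fin (2*N)) : sympIdx N (revF N i) = - sympIdx N i := by
  have := sympIdx_add_eq_zero_iff (i := i) (j := revF N i) |>.mpr rfl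
  linarith

/-- sign attached to row `i` of the symplectic form -/
def sgn (N : ℕ) (k : Type*) [Field k] (i : Fin (2*N)) : k :=
  if (i:ℕ) < N then 1 else -1

lemma sympForm_apply (i j : Fin (2*N)) :
    sympForm N k i j = if j = revF N i then sgn N k i else 0 := by
  unfold sympForm sgn
  by_cases h : sympIdx N i + sympIdx N j = 0
  · rw [if_pos h, if_pos (sympIdx_add_eq_zero_iff.mp h)]
    by_cases hi : (i:ℕ) < N
    · rw [if_pos ((sympIdx_neg_iff i).mpr hi), if_pos hi]
    · rw [if_neg fun hc => hi ((sympIdx_neg_iff i).mp hc), if_neg hi]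
  · rw [if_neg h, if_neg fun hc => h (sympIdx_add_eq_zero_iff.mpr hc)]

lemma sgn_mul_sgn (i : Fin (2*N)) : sgn N k i * sgn N k i = 1 := by
  unfold sgn; split_ifs <;> ring

lemma sgn_revF (i : Fin (2*N)) : sgn N k (revF N i) = - sgn N k i := by
  have hi := i.isLt
  unfold sgn
  rw [revF_val]
  split_ifs with h1 h2 h2 <;> first | omega | ring

lemma J_mul_apply (M : Matrix (Fin (2*N)) (Fin (2*N)) k) (i j : Fin (2*N)) :
    (sympForm N k * M) i j = sgn N k i * M (revF N i) j := by
  rw [Matrix.mul_apply]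
  rw [Finset.sum_eq_single (revF N i)]
  · rw [sympForm_apply, if_pos rfl]
  · intro p _ hp
    rw [sympForm_apply, if_neg hp, zero_mul]
  · intro hc; exact absurd (Finset.mem_univ _) hc

lemma mul_J_apply (M : Matrix (Fin (2*N)) (Fin (2*N)) k) (i j : Fin (2*N)) :
    (M * sympForm N k) i j = M i (revF N j) * (- sgn N k j) := by
  rw [Matrix.mul_apply]
  rw [Finset.sum_eq_single (revF N j)]
  · rw [sympForm_apply]
    rw [if_pos (revF_revF j).symm, sgn_revF]
  · intro p _ hp
    rw [sympForm_apply, if_neg ?_, mul_zero]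
    intro hc
    exact hp (by rw [hc, revF_revF])
  · intro hc; exact absurd (Finset.mem_univ _) hc

lemma J_transpose : (sympForm N k)ᵀ = - sympForm N k := by
  ext i j
  rw [Matrix.transpose_apply, Matrix.neg_apply, sympForm_apply, sympForm_apply]
  by_cases h : i = revF N j
  · rw [if_pos h, if_pos (by rw [h, revF_revF])]
    rw [h, sgn_revF, neg_neg]
  · rw [if_neg h, if_neg fun hc => h (by rw [hc, revF_revF]), neg_zero]

lemma J_mul_J : sympForm N k * sympForm N k = (-1 : Matrix (Fin (2*N)) (Fin (2*N)) k) := by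
  ext i j
  rw [J_mul_apply, sympForm_apply, revF_revF]
  by_cases h : j = i
  · subst h
    rw [if_pos rfl, sgn_revF, Matrix.neg_apply, Matrix.one_apply_eq]
    rw [mul_neg, sgn_mul_sgn]
  · rw [if_neg h, mul_zero, Matrix.neg_apply,
      Matrix.one_apply_ne (Ne.symm h), neg_zero]

/-- diagonal entries of φ -/
lemma phi_diag_revF (m : ℕ) (i : Fin (2*N)) :
    (if |sympIdx N (revF N i)| ≤ (m:ℤ) then (1:k) else -1)
      = (if |sympIdx N i| ≤ (m:ℤ) then (1:k) else -1) := by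
  rw [sympIdx_revF, abs_neg]

lemma phi_mul_phi (m : ℕ) : phiMat m N k * phiMat m N k = 1 := by
  unfold phiMat
  rw [Matrix.diagonal_mul_diagonal]
  have hf : (fun i : Fin (2*N) => (if |sympIdx N i| ≤ (m:ℤ) then (1:k) else -1) *
      (if |sympIdx N i| ≤ (m:ℤ) then (1:k) else -1)) = fun _ => (1:k) := by
    funext i; split_ifs <;> ring
  rw [hf, Matrix.diagonal_one]

lemma phi_transpose (m : ℕ) : (phiMat m N k)ᵀ = phiMat m N k := Matrix.diagonal_transpose _

lemma J_mul_phi (m : ℕ) : sympForm N k * phiMat m N k = phiMat m N k * sympForm N k := by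
  unfold phiMat
  ext i j
  rw [Matrix.mul_diagonal, Matrix.diagonal_mul, sympForm_apply]
  by_cases h : j = revF N i
  · rw [if_pos h, h, phi_diag_revF m i, mul_comm]
  · rw [if_neg h, zero_mul, mul_zero]

lemma phi_symplectic (m : ℕ) :
    (phiMat m N k)ᵀ * sympForm N k * phiMat m N k = sympForm N k := by
  rw [phi_transpose, mul_assoc, J_mul_phi, ← mul_assoc, phi_mul_phi, one_mul]

end


section
variable {k : Type*} [Field k] {N : ℕ}

lemma aeval_monomial_smul (A : Matrix (Fin N) (Fin N) k) (n : ℕ) (a : k) :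
    aeval A (monomial n a) = a • A ^ n := by
  rw [aeval_monomial, Algebra.algebraMap_eq_smul_one, smul_mul_assoc, one_mul]

lemma matrix_sqrt [IsAlgClosed k] (h2 : (2:k) ≠ 0) (A : Matrix (Fin N) (Fin N) k)
    (hA : IsUnit A) : ∃ q : k[X], (aeval A q) * (aeval A q) = A := by
  have hmon := Matrix.charpoly_monic A
  have hdet : IsUnit A.det := (Matrix.isUnit_iff_isUnit_det A).mp hA
  have h0 : eval 0 A.charpoly ≠ 0 := by
    have hc := Matrix.det_eq_sign_charpoly_coeff A
    intro hc0
    rw [← Polynomial.coeff_zero_eq_eval_zero] at hc0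
    rw [hc0, mul_zero] at hc
    exact hdet.ne_zero hc
  obtain ⟨q, hq⟩ := sqrt_mod_poly h2 A.charpoly hmon h0
  obtain ⟨r, hr⟩ := hq
  refine ⟨q, ?_⟩
  have hch := Matrix.aeval_self_charpoly A
  have h1 : aeval A (q*q - X) = 0 := by rw [hr, _root_.map_mul, hch, zero_mul]
  have h2' : aeval A (q*q - X) = aeval A q * aeval A q - A := by
    rw [_root_.map_sub, _root_.map_mul, aeval_X]
  rw [h2'] at h1
  exact sub_eq_zero.mp h1

lemma commute_aeval {A B : Matrix (Fin N) (Fin N) k} (h : A * B = B * A) (q : k[X]) :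
    (aeval A q) * B = B * (aeval A q) := by
  induction q using Polynomial.induction_on' with
  | add p r hp hr => rw [_root_.map_add, add_mul, mul_add, hp, hr]
  | monomial n a =>
    have hpow : A ^ n * B = B * A ^ n := (Commute.pow_left h n)
    rw [aeval_monomial_smul, smul_mul_assoc, mul_smul_comm, hpow]

lemma aeval_transpose {A : Matrix (Fin N) (Fin N) k} (q : k[X]) :
    (aeval A q)ᵀ = aeval Aᵀ q := by
  induction q using Polynomial.induction_on' with
  | add p r hp hr => rw [_root_.map_add, transpose_add, hp, hr, _root_.map_add]
  | monomial n a =>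
    rw [aeval_monomial_smul, aeval_monomial_smul, transpose_smul, transpose_pow]

lemma blockTriangular_aeval {A : Matrix (Fin N) (Fin N) k}
    (hA : A.BlockTriangular id) (q : k[X]) : (aeval A q).BlockTriangular id := by
  induction q using Polynomial.induction_on' with
  | add p r hp hr => rw [_root_.map_add]; exact hp.add hr
  | monomial n a =>
    have hpow : (A ^ n).BlockTriangular id := by
      induction n with
      | zero => simpa using blockTriangular_one
      | succ n ihn => rw [pow_succ]; exact ihn.mul hA
    rw [aeval_monomial_smul]
    intro i j hij
    rw [Matrix.smul_apply, hpow hij, smul_zero]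

lemma intertwine_aeval {A B J : Matrix (Fin N) (Fin N) k} (h : J * B = A * J) (q : k[X]) :
    J * (aeval B q) = (aeval A q) * J := by
  induction q using Polynomial.induction_on' with
  | add p r hp hr => rw [_root_.map_add, _root_.map_add, mul_add, add_mul, hp, hr]
  | monomial n a =>
    have hpow : J * B ^ n = A ^ n * J := by
      induction n with
      | zero => simp
      | succ n ihn => rw [pow_succ, pow_succ, ← mul_assoc, ihn, mul_assoc, h, ← mul_assoc]
    rw [aeval_monomial_smul, aeval_monomial_smul, mul_smul_comm, smul_mul_assoc, hpow]
end

section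
variable {k : Type*} [Field k] {N : ℕ} {d : ℕ}

lemma isUpperTriangular_iff {M : Matrix (Fin d) (Fin d) k} :
    _root_.IsUpperTriangular M ↔ M.BlockTriangular id :=
  ⟨fun h _i _j hij => h _ _ hij, fun h i j hij => @h i j hij⟩

lemma IsUpperTriangular.mul' {M M' : Matrix (Fin d) (Fin d) k}
    (h : _root_.IsUpperTriangular M) (h' : _root_.IsUpperTriangular M') : _root_.IsUpperTriangular (M * M') :=
  isUpperTriangular_iff.mpr ((isUpperTriangular_iff.mp h).mul (isUpperTriangular_iff.mp h'))

lemma IsUpperTriangular.unit_inv (u : (Matrix (Fin d) (Fin d) k)ˣ)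
    (h : _root_.IsUpperTriangular u.val) : _root_.IsUpperTriangular (u.inv : Matrix (Fin d) (Fin d) k) := by
  have : Invertible (u.val) := u.invertible
  have h2 := Matrix.blockTriangular_inv_of_blockTriangular (isUpperTriangular_iff.mp h)
  have h3 : (u.val)⁻¹ = u.inv := by
    rw [← Matrix.coe_units_inv u]
    rfl
  rw [← h3]

  exact isUpperTriangular_iff.mpr h2

lemma IsUpperTriangular.aeval {A : Matrix (Fin d) (Fin d) k}
    (hA : _root_.IsUpperTriangular A) (q : k[X]) : _root_.IsUpperTriangular (Polynomial.aeval A q) :=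
  isUpperTriangular_iff.mpr (blockTriangular_aeval (isUpperTriangular_iff.mp hA) q)

/-- conjugation by J maps lower triangular to upper triangular -/
lemma isUpperTriangular_J_conj {M : Matrix (Fin (2*N)) (Fin (2*N)) k}
    (hM : ∀ i j : Fin (2*N), (i:ℕ) < (j:ℕ) → M i j = 0) :
    _root_.IsUpperTriangular (sympForm N k * M * (-sympForm N k)) := by
  intro i j hij
  have hi := i.isLt
  have hj := j.isLt
  rw [Matrix.mul_neg, Matrix.neg_apply, mul_J_apply, J_mul_apply]
  rw [hM (revF N i) (revF N j) (by rw [revF_val, revF_val]; omega)]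
  simp

/-- the transpose of a unit, as a unit -/
def tUnit (u : (Matrix (Fin d) (Fin d) k)ˣ) : (Matrix (Fin d) (Fin d) k)ˣ :=
  ⟨u.valᵀ, u.invᵀ,
   by rw [← Matrix.transpose_mul, u.inv_val, Matrix.transpose_one],
   by rw [← Matrix.transpose_mul, u.val_inv, Matrix.transpose_one]⟩

@[simp] lemma tUnit_val (u : (Matrix (Fin d) (Fin d) k)ˣ) : (tUnit u).val = u.valᵀ := rfl
@[simp] lemma tUnit_inv_val (u : (Matrix (Fin d) (Fin d) k)ˣ) :
    ((tUnit u)⁻¹).val = u.invᵀ := rfl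

lemma tUnit_mul (u v : (Matrix (Fin d) (Fin d) k)ˣ) :
    tUnit (u * v) = tUnit v * tUnit u :=
  Units.ext (by simp [Units.val_mul, Matrix.transpose_mul])

lemma tUnit_tUnit (u : (Matrix (Fin d) (Fin d) k)ˣ) : tUnit (tUnit u) = u :=
  Units.ext (by simp)

lemma tUnit_inv (u : (Matrix (Fin d) (Fin d) k)ˣ) : tUnit u⁻¹ = (tUnit u)⁻¹ :=
  Units.ext rfl

end
section
/-- `J` as a unit -/
def JUnit (N : ℕ) (k : Type*) [Field k] : (Matrix (Fin (2*N)) (Fin (2*N)) k)ˣ :=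
  ⟨sympForm N k, -sympForm N k,
   by rw [Matrix.mul_neg, J_mul_J, neg_neg],
   by rw [Matrix.neg_mul, J_mul_J, neg_neg]⟩

variable {k : Type*} [Field k] {N : ℕ}

@[simp] lemma JUnit_val : (JUnit N k).val = sympForm N k := rfl
@[simp] lemma JUnit_inv_val : ((JUnit N k)⁻¹).val = -sympForm N k := rfl

lemma JUnit_inv_eq : (JUnit N k)⁻¹ = - JUnit N k := Units.ext rfl

lemma tUnit_JUnit : tUnit (JUnit N k) = - JUnit N k :=
  Units.ext (by simp; exact J_transpose)

/-- the involution θ of `GL_{2N}` whose fixed points are `Sp_{2N}` -/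
def thetaMap : (Matrix (Fin (2*N)) (Fin (2*N)) k)ˣ →* (Matrix (Fin (2*N)) (Fin (2*N)) k)ˣ where
  toFun u := JUnit N k * (tUnit u)⁻¹ * (JUnit N k)⁻¹
  map_one' := by
    have h1 : tUnit (1 : (Matrix (Fin (2*N)) (Fin (2*N)) k)ˣ) = 1 :=
      Units.ext (by simp)
    show JUnit N k * (tUnit (1:(Matrix (Fin (2*N)) (Fin (2*N)) k)ˣ))⁻¹ * (JUnit N k)⁻¹ = 1
    rw [h1]; group
  map_mul' u v := by
    show JUnit N k * (tUnit (u*v))⁻¹ * (JUnit N k)⁻¹ =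
      (JUnit N k * (tUnit u)⁻¹ * (JUnit N k)⁻¹) * (JUnit N k * (tUnit v)⁻¹ * (JUnit N k)⁻¹)
    rw [tUnit_mul, _root_.mul_inv_rev]; group

lemma thetaMap_apply (u : (Matrix (Fin (2*N)) (Fin (2*N)) k)ˣ) :
    thetaMap u = JUnit N k * (tUnit u)⁻¹ * (JUnit N k)⁻¹ := rfl

lemma JUnit_sq : JUnit N k * JUnit N k = -1 :=
  Units.ext (by rw [Units.val_mul, JUnit_val, J_mul_J, Units.val_neg, Units.val_one])

lemma thetaMap_thetaMap (u : (Matrix (Fin (2*N)) (Fin (2*N)) k)ˣ) :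
    thetaMap (thetaMap u) = u := by
  rw [thetaMap_apply, thetaMap_apply]
  rw [tUnit_mul, tUnit_mul, tUnit_inv, tUnit_inv, tUnit_JUnit, tUnit_tUnit]
  rw [show ((-JUnit N k)⁻¹ * (u⁻¹ * -JUnit N k))⁻¹
      = (-JUnit N k)⁻¹ * u * (-JUnit N k) from by group]
  rw [← JUnit_inv_eq, inv_inv]
  rw [show JUnit N k * (JUnit N k * u * (JUnit N k)⁻¹) * (JUnit N k)⁻¹
      = (JUnit N k * JUnit N k) * u * ((JUnit N k) * (JUnit N k))⁻¹ from by group]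
  rw [JUnit_sq, inv_neg, inv_one, neg_one_mul, mul_neg_one, neg_neg]

/-- θ-fixed points are exactly the symplectic matrices -/
lemma thetaMap_fixed_iff (u : (Matrix (Fin (2*N)) (Fin (2*N)) k)ˣ) :
    thetaMap u = u ↔ u.valᵀ * sympForm N k * u.val = sympForm N k := by
  have hbridge : tUnit u * JUnit N k * u = JUnit N k ↔
      u.valᵀ * sympForm N k * u.val = sympForm N k := by
    rw [Units.ext_iff]
    simp [Units.val_mul]
  rw [← hbridge]
  constructor
  · intro h
    rw [thetaMap_apply] at h
    have h1 : JUnit N k * (tUnit u)⁻¹ = u * JUnit N k := by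
      calc JUnit N k * (tUnit u)⁻¹
          = JUnit N k * (tUnit u)⁻¹ * (JUnit N k)⁻¹ * JUnit N k := by group
        _ = u * JUnit N k := by rw [h]
    have h2 : (-JUnit N k) * (tUnit u)⁻¹ = u * (-JUnit N k) := by
      rw [neg_mul, mul_neg, h1]
    have h3 : (JUnit N k)⁻¹ * (tUnit u)⁻¹ = u * (JUnit N k)⁻¹ := by
      rw [JUnit_inv_eq]; exact h2
    have h4 : (tUnit u * JUnit N k)⁻¹ = (JUnit N k * u⁻¹)⁻¹ := by
      rw [_root_.mul_inv_rev, _root_.mul_inv_rev, inv_inv, h3]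
    have h5 : tUnit u * JUnit N k = JUnit N k * u⁻¹ := inv_injective h4
    rw [h5]; group
  · intro h
    have h1 : tUnit u * JUnit N k = JUnit N k * u⁻¹ := by
      calc tUnit u * JUnit N k = tUnit u * JUnit N k * u * u⁻¹ := by group
        _ = JUnit N k * u⁻¹ := by rw [h]
    have h2 : (JUnit N k)⁻¹ * (tUnit u)⁻¹ = u * (JUnit N k)⁻¹ := by
      have := congrArg (·⁻¹) h1
      simpa [_root_.mul_inv_rev] using this
    have h3 : (-(JUnit N k)) * (tUnit u)⁻¹ = u * (-(JUnit N k)) := by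
      rw [← JUnit_inv_eq]; exact h2
    have h4 : JUnit N k * (tUnit u)⁻¹ = u * JUnit N k := by
      rw [neg_mul, mul_neg] at h3
      exact neg_injective h3
    rw [thetaMap_apply, h4]; group
end

/-- Let `k` be algebraically closed of characteristic `≠ 2`, `N = m+n ≥ 1`.
If `g₁, g₂ ∈ Sp_{2N}(k)` lie in the same double coset `B(k) g K(k)` inside `GL_{2N}(k)`
(`B(k)` the upper triangular invertible matrices, `K(k)` the centralizer of `φ` in the
general linear group), then they lie in the same double coset `B^φ(k) g K^φ(k)` inside
`Sp_{2N}(k)`; i.e. the natural map of double coset sets induced by `Sp_{2N} ⊆ GL_{2N}`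
is injective. -/
theorem Sp_double_cosets_inject_into_GL_double_cosets
    (k : Type*) [Field k] [IsAlgClosed k] (hchar : ringChar k ≠ 2)
    (m n : ℕ) (hmn : 1 ≤ m + n)
    (g₁ g₂ : GL (Fin (2 * (m + n))) k) (hg₁ : InSp (m + n) g₁) (hg₂ : InSp (m + n) g₂)
    (hGL : ∃ b h : GL (Fin (2 * (m + n))) k,
      _root_.IsUpperTriangular (b : Matrix (Fin (2 * (m + n))) (Fin (2 * (m + n))) k) ∧
      CommutesWithPhi m (m + n) (h : Matrix (Fin (2 * (m + n))) (Fin (2 * (m + n))) k) ∧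
      g₂ = b * g₁ * h) :
    ∃ b h : GL (Fin (2 * (m + n))) k, InSp (m + n) b ∧ InSp (m + n) h ∧
      _root_.IsUpperTriangular (b : Matrix (Fin (2 * (m + n))) (Fin (2 * (m + n))) k) ∧
      CommutesWithPhi m (m + n) (h : Matrix (Fin (2 * (m + n))) (Fin (2 * (m + n))) k) ∧
      g₂ = b * g₁ * h := by
  classical
  obtain ⟨b, h, hub, hcp, heq⟩ := hGL
  let φU : GL (Fin (2 * (m + n))) k :=
    ⟨phiMat m (m+n) k, phiMat m (m+n) k, phi_mul_phi m, phi_mul_phi m⟩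
  have hφUval : (φU : Matrix (Fin (2 * (m + n))) (Fin (2 * (m + n))) k) = phiMat m (m+n) k := rfl
  have hθg₁ : thetaMap g₁ = g₁ := (thetaMap_fixed_iff g₁).mpr hg₁
  have hθg₂ : thetaMap g₂ = g₂ := (thetaMap_fixed_iff g₂).mpr hg₂
  have hθφ : thetaMap φU = φU := (thetaMap_fixed_iff φU).mpr (phi_symplectic m)
  have hφh : h * φU = φU * h := Units.ext (by
    rw [Units.val_mul, Units.val_mul, hφUval]; exact hcp)
  set x₁ := g₁ * φU * g₁⁻¹ with hx₁def
  set x₂ := g₂ * φU * g₂⁻¹ with hx₂def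
  have hconj : x₂ = b * x₁ * b⁻¹ := by
    rw [hx₂def, hx₁def, heq]
    have hmid : h * φU * h⁻¹ = φU := by rw [hφh, mul_inv_cancel_right]
    calc (b*g₁*h) * φU * (b*g₁*h)⁻¹
        = b * (g₁ * (h * φU * h⁻¹) * g₁⁻¹) * b⁻¹ := by group
      _ = b * (g₁ * φU * g₁⁻¹) * b⁻¹ := by rw [hmid]
  have hθx₁ : thetaMap x₁ = x₁ := by
    rw [hx₁def, _root_.map_mul, _root_.map_mul, _root_.map_inv, hθg₁, hθφ]
  have hθx₂ : thetaMap x₂ = x₂ := by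
    rw [hx₂def, _root_.map_mul, _root_.map_mul, _root_.map_inv, hθg₂, hθφ]
  set a := b⁻¹ * thetaMap b with hadef
  have hθba : thetaMap b = b * a := by rw [hadef]; group
  have hax : a * x₁ = x₁ * a := by
    have h1 : thetaMap b * x₁ * (thetaMap b)⁻¹ = x₂ := by
      have h0 := congrArg thetaMap hconj
      rw [hθx₂, _root_.map_mul, _root_.map_mul, _root_.map_inv, hθx₁] at h0
      exact h0.symm
    have h2 : a * x₁ * a⁻¹ = x₁ := by
      rw [hadef]
      calc (b⁻¹ * thetaMap b) * x₁ * (b⁻¹ * thetaMap b)⁻¹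
          = b⁻¹ * (thetaMap b * x₁ * (thetaMap b)⁻¹) * b := by group
        _ = b⁻¹ * x₂ * b := by rw [h1]
        _ = b⁻¹ * (b * x₁ * b⁻¹) * b := by rw [← hconj]
        _ = x₁ := by group
    calc a * x₁ = (a * x₁ * a⁻¹) * a := by group
      _ = x₁ * a := by rw [h2]
  have hθa : thetaMap a = a⁻¹ := by
    rw [hadef, _root_.map_mul, _root_.map_inv, thetaMap_thetaMap, _root_.mul_inv_rev, inv_inv]
  have hJa : JUnit (m+n) k * tUnit a = a * JUnit (m+n) k := by
    have h1 : JUnit (m+n) k * (tUnit a)⁻¹ * (JUnit (m+n) k)⁻¹ = a⁻¹ := by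
      rw [← thetaMap_apply, hθa]
    have h2 : (JUnit (m+n) k * (tUnit a)⁻¹ * (JUnit (m+n) k)⁻¹)⁻¹ = a := by
      rw [h1, inv_inv]
    calc JUnit (m+n) k * tUnit a
        = (JUnit (m+n) k * (tUnit a)⁻¹ * (JUnit (m+n) k)⁻¹)⁻¹ * JUnit (m+n) k := by group
      _ = a * JUnit (m+n) k := by rw [h2]
  have hJaval : sympForm (m+n) k * (a.val)ᵀ = a.val * sympForm (m+n) k := by
    have h0 := congrArg Units.val hJa
    simpa [Units.val_mul] using h0
  have hubinv : _root_.IsUpperTriangular (b.inv : Matrix (Fin (2*(m+n))) (Fin (2*(m+n))) k) :=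
    hub.unit_inv b
  have hUTθb : _root_.IsUpperTriangular ((thetaMap b).val) := by
    have hv : (thetaMap b).val
        = sympForm (m+n) k * (b.inv)ᵀ * (- sympForm (m+n) k) := rfl
    rw [hv]
    apply isUpperTriangular_J_conj
    intro i j hij
    exact hubinv j i hij
  have hUTa : _root_.IsUpperTriangular (a.val) := by
    rw [hadef, Units.val_mul]
    exact hubinv.mul' hUTθb
  obtain ⟨q, hq⟩ := matrix_sqrt (Ring.two_ne_zero hchar) a.val a.isUnit
  set s := Polynomial.aeval (a.val) q with hsdef
  have hcommsA : s * a.val = a.val * s := commute_aeval rfl q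
  have hCsa : Commute s (a.val) := hcommsA
  have hCsi : s * a.inv = a.inv * s := hCsa.units_inv_right
  have hmain : a.inv * (s * s) = 1 := by rw [hq]; exact a.inv_val
  have hv1 : s * (a.inv * s) = 1 := by
    calc s * (a.inv * s) = (s * a.inv) * s := by rw [mul_assoc]
      _ = a.inv * s * s := by rw [hCsi]
      _ = a.inv * (s * s) := by rw [mul_assoc]
      _ = 1 := hmain
  have hv2 : (a.inv * s) * s = 1 := by rw [mul_assoc]; exact hmain
  set S : GL (Fin (2*(m+n))) k := ⟨s, a.inv * s, hv1, hv2⟩ with hSdef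
  have hSval : (S : Matrix (Fin (2*(m+n))) (Fin (2*(m+n))) k) = s := rfl
  have hSsq : S * S = a := Units.ext (by rw [Units.val_mul, hSval, hq])
  have hJS : JUnit (m+n) k * tUnit S = S * JUnit (m+n) k := Units.ext (by
    rw [Units.val_mul, Units.val_mul, JUnit_val, tUnit_val, hSval, hsdef, aeval_transpose]
    exact intertwine_aeval hJaval q)
  have hθS : thetaMap S = S⁻¹ := by
    have h1 : tUnit S = (JUnit (m+n) k)⁻¹ * (S * JUnit (m+n) k) := by rw [← hJS]; group
    rw [thetaMap_apply, h1]; group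
  have hSx : S * x₁ = x₁ * S := Units.ext (by
    rw [Units.val_mul, Units.val_mul, hSval]
    have haxval : a.val * x₁.val = x₁.val * a.val := by
      have h0 := congrArg Units.val hax
      simpa [Units.val_mul] using h0
    rw [hsdef]
    exact commute_aeval haxval q)
  set b' := b * S with hb'def
  have hθb' : thetaMap b' = b' := by
    rw [hb'def]
    calc thetaMap (b * S) = (b * a) * S⁻¹ := by rw [_root_.map_mul, hθba, hθS]
      _ = b * (S * S) * S⁻¹ := by rw [hSsq]
      _ = b * S := by group
  have hInSpb' : InSp (m+n) b' := (thetaMap_fixed_iff b').mp hθb'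
  have hUTb' : _root_.IsUpperTriangular
      (b' : Matrix (Fin (2*(m+n))) (Fin (2*(m+n))) k) := by
    rw [hb'def, Units.val_mul, hSval, hsdef]
    exact hub.mul' (hUTa.aeval q)
  have hconj' : b' * x₁ * b'⁻¹ = x₂ := by
    rw [hb'def]
    have hmid : S * x₁ * S⁻¹ = x₁ := by rw [hSx, mul_inv_cancel_right]
    calc (b * S) * x₁ * (b * S)⁻¹ = b * (S * x₁ * S⁻¹) * b⁻¹ := by group
      _ = b * x₁ * b⁻¹ := by rw [hmid]
      _ = x₂ := hconj.symm
  set h' := g₁⁻¹ * b'⁻¹ * g₂ with hh'def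
  have heq' : g₂ = b' * g₁ * h' := by rw [hh'def]; group
  have hθh' : thetaMap h' = h' := by
    rw [hh'def, _root_.map_mul, _root_.map_mul, _root_.map_inv, _root_.map_inv, hθg₁, hθg₂, hθb']
  have hInSph' : InSp (m+n) h' := (thetaMap_fixed_iff h').mp hθh'
  have hφconj : h' * φU * h'⁻¹ = φU := by
    calc h' * φU * h'⁻¹
        = g₁⁻¹ * b'⁻¹ * (g₂ * φU * g₂⁻¹) * b' * g₁ := by rw [hh'def]; group
      _ = g₁⁻¹ * b'⁻¹ * x₂ * b' * g₁ := by rw [← hx₂def]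
      _ = g₁⁻¹ * b'⁻¹ * (b' * x₁ * b'⁻¹) * b' * g₁ := by rw [hconj']
      _ = g₁⁻¹ * x₁ * g₁ := by group
      _ = g₁⁻¹ * (g₁ * φU * g₁⁻¹) * g₁ := by rw [hx₁def]
      _ = φU := by group
  have hcph' : CommutesWithPhi m (m+n)
      (h' : Matrix (Fin (2*(m+n))) (Fin (2*(m+n))) k) := by
    have hcm : h' * φU = φU * h' := by
      calc h' * φU = (h' * φU * h'⁻¹) * h' := by group
        _ = φU * h' := by rw [hφconj]
    have h0 := congrArg Units.val hcm
    rw [Units.val_mul, Units.val_mul, hφUval] at h0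
    exact h0
  exact ⟨b', h', hInSpb', hInSph', hUTb', hcph', heq'⟩
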